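/- Let R_0 be a commutative Noetherian domain and let M be the cokernel of a p × q matrix A (p ≤ q) over R_0 of maximal rank p such that every entry of A lies in an ideal c of R_0 and c is contained in the radical of the ideal of p × p minors of A. Then M = 0 if and only if c = R_0, and every associated prime of M contains c. -/

import Mathlib

/-- The set of maximal (`p × p`) minors of a `p × q` matrix. -/
def maxMinors {R₀ : Type*} [CommRing R₀] {p q : ℕ} (A : Matrix (Fin p) (Fin q) R₀) :
    Set R₀ :=
  {x | ∃ g : Fin p → Fin q, Function.Injective g ∧ (A.submatrix id g).det = x}

lemma minor_smul_mem {R₀ : Type*} [CommRing R₀] {p q : ℕ}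
    (A : Matrix (Fin p) (Fin q) R₀) (g : Fin p → Fin q) (hg : Function.Injective g)
    (v : Fin p → R₀) :
    (A.submatrix id g).det • v ∈ LinearMap.range A.mulVecLin := by
  set B := A.submatrix id g with hB
  set u := B.adjugate.mulVec v with hu
  refine ⟨fun j => ∑ k, if g k = j then u k else 0, ?_⟩
  have h1 : A.mulVecLin (fun j => ∑ k, if g k = j then u k else 0) = B.mulVec u := by
    funext i
    simp only [Matrix.mulVecLin_apply, Matrix.mulVec, dotProduct,
      Finset.mul_sum]
    rw [Finset.sum_comm]
    refine Finset.sum_congr rfl fun k _ => ?_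
    simp [mul_ite, Finset.sum_ite_eq, hB, mul_comm]
  rw [h1, hu, Matrix.mulVec_mulVec, Matrix.mul_adjugate, Matrix.smul_mulVec,
    Matrix.one_mulVec]

theorem stmt_17 {R₀ : Type*} [CommRing R₀] [IsDomain R₀] [IsNoetherianRing R₀]
    (p q : ℕ) (hp : 0 < p) (hpq : p ≤ q) (A : Matrix (Fin p) (Fin q) R₀)
    (hrank : ∃ g : Fin p → Fin q, Function.Injective g ∧ (A.submatrix id g).det ≠ 0)
    (c : Ideal R₀) (hentries : ∀ i j, A i j ∈ c)
    (hc : c ≤ (Ideal.span (maxMinors A)).radical) :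
    (Subsingleton ((Fin p → R₀) ⧸ LinearMap.range A.mulVecLin) ↔ c = ⊤) ∧
      ∀ P ∈ associatedPrimes R₀ ((Fin p → R₀) ⧸ LinearMap.range A.mulVecLin),
        c ≤ P := by
  set N := LinearMap.range A.mulVecLin with hN
  -- every maximal minor annihilates the cokernel
  have hann : ∀ m : (Fin p → R₀) ⧸ N,
      Ideal.span (maxMinors A) ≤ LinearMap.ker (LinearMap.toSpanSingleton R₀ _ m) := by
    intro m
    rw [Ideal.span_le]
    rintro x ⟨g, hg, rfl⟩
    obtain ⟨v, rfl⟩ := Submodule.Quotient.mk_surjective N m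
    simp only [SetLike.mem_coe, LinearMap.mem_ker, LinearMap.toSpanSingleton_apply]
    rw [← Submodule.Quotient.mk_smul, Submodule.Quotient.mk_eq_zero]
    exact minor_smul_mem A g hg v
  constructor
  · constructor
    · intro h
      -- N = ⊤, so the first standard basis vector is in the range
      have hNtop : N = ⊤ := Submodule.unique_quotient_iff_eq_top.mp ⟨@uniqueOfSubsingleton _ h 0⟩
      have : (Pi.single (⟨0, hp⟩ : Fin p) 1 : Fin p → R₀) ∈ N := hNtop ▸ Submodule.mem_top
      obtain ⟨w, hw⟩ := this
      have h1 : (1 : R₀) ∈ c := by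
        have := congrFun hw ⟨0, hp⟩
        simp only [Matrix.mulVecLin_apply, Matrix.mulVec, dotProduct,
          Pi.single_eq_same] at this
        rw [← this]
        exact Ideal.sum_mem c fun j _ => Ideal.mul_mem_right _ c (hentries _ _)
      exact Ideal.eq_top_of_isUnit_mem c h1 isUnit_one
    · intro hctop
      have hrad : (Ideal.span (maxMinors A)).radical = ⊤ := top_le_iff.mp (hctop ▸ hc)
      have hspan : Ideal.span (maxMinors A) = ⊤ := (Ideal.radical_eq_top).mp hrad
      constructor
      intro m m'
      have h1 : (1 : R₀) • m = 0 := hann m (hspan ▸ Submodule.mem_top)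
      have h2 : (1 : R₀) • m' = 0 := hann m' (hspan ▸ Submodule.mem_top)
      rw [one_smul] at h1 h2
      rw [h1, h2]
  · rintro P ⟨hP, x, rfl⟩
    refine le_trans hc (hP.radical_le_iff.mpr ?_)
    intro d hd
    apply Ideal.le_radical
    rw [Submodule.mem_colon_singleton, Submodule.mem_bot]
    exact hann x hd
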